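/- Let n ≥ 1 be a natural number, let (a_k)_{k≥0} be a sequence of complex numbers, and let b_m = Σ_{k=0}^m C(m,k) a_k be its binomial transform. Then: Σ_{k=1}^n C(n,k) a_k / k = Σ_{m=1}^n b_m / m − b_0 · H_n, where H_n = Σ_{k=1}^n 1/k is the n-th harmonic number. -/
import Mathlib


open Finset

lemma key_div (n k : ℕ) (hk : 1 ≤ k) (x : ℂ) :
    (Nat.choose n (k - 1) : ℂ) * x / (k : ℂ) =
      (Nat.choose (n + 1) k : ℂ) * x / ((n : ℂ) + 1) := by
  obtain ⟨j, rfl⟩ : ∃ j, k = j + 1 := ⟨k - 1, by omega⟩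
  have h : (n + 1) * Nat.choose n j = Nat.choose (n + 1) (j + 1) * (j + 1) :=
    Nat.add_one_mul_choose_eq n j
  have hc : ((n : ℂ) + 1) * (Nat.choose n j : ℂ) =
      (Nat.choose (n + 1) (j + 1) : ℂ) * ((j : ℂ) + 1) := by
    exact_mod_cast congrArg (Nat.cast : ℕ → ℂ) h
  have hj : ((j : ℂ) + 1) ≠ 0 := by
    exact_mod_cast Nat.cast_add_one_ne_zero (R := ℂ) j
  have hn : ((n : ℂ) + 1) ≠ 0 := by
    exact_mod_cast Nat.cast_add_one_ne_zero (R := ℂ) n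
  simp only [Nat.add_sub_cancel]
  push_cast
  field_simp
  ring_nf
  ring_nf at hc
  linear_combination x * hc

lemma icc_sum (m : ℕ) (f : ℕ → ℂ) :
    ∑ k ∈ Finset.range (m + 1), f k = f 0 + ∑ k ∈ Finset.Icc 1 m, f k := by
  rw [Finset.range_eq_Ico, Finset.sum_eq_sum_Ico_succ_bot (by omega)]
  congr 1

theorem stmt_2 (n : ℕ) (hn : 1 ≤ n) (a b : ℕ → ℂ)
    (hb : ∀ m, b m = ∑ k ∈ Finset.range (m + 1), (Nat.choose m k : ℂ) * a k) :
    ∑ k ∈ Finset.Icc 1 n, (Nat.choose n k : ℂ) * a k / (k : ℂ) =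
      ∑ m ∈ Finset.Icc 1 n, b m / (m : ℂ) -
        b 0 * ∑ k ∈ Finset.Icc 1 n, (1 : ℂ) / (k : ℂ) := by
  have hb0 : b 0 = a 0 := by simp [hb]
  induction n with
  | zero => omega
  | succ n ih =>
    rcases Nat.eq_zero_or_pos n with rfl | hn'
    · simp [hb, Finset.sum_range_succ, hb0]
    · have ih' := ih hn'
      have hn1 : ((n : ℂ) + 1) ≠ 0 := Nat.cast_add_one_ne_zero n
      rw [Finset.sum_Icc_succ_top (by omega), Finset.sum_Icc_succ_top (by omega),
        Finset.sum_Icc_succ_top (by omega)]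
      -- Pascal on the LHS
      have pascal : ∀ k ∈ Finset.Icc 1 n,
          (Nat.choose (n + 1) k : ℂ) * a k / (k : ℂ) =
            (Nat.choose n k : ℂ) * a k / (k : ℂ) +
              (Nat.choose n (k - 1) : ℂ) * a k / (k : ℂ) := by
        intro k hk
        simp only [Finset.mem_Icc] at hk
        obtain ⟨j, rfl⟩ : ∃ j, k = j + 1 := ⟨k - 1, by omega⟩
        rw [Nat.choose_succ_succ']
        push_cast
        ring
      rw [Finset.sum_congr rfl pascal, Finset.sum_add_distrib, ih']
      -- handle the second Pascal piece plus the top term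
      have hsplit :
          (∑ k ∈ Finset.Icc 1 n, (Nat.choose n (k - 1) : ℂ) * a k / (k : ℂ)) +
            (Nat.choose (n + 1) (n + 1) : ℂ) * a (n + 1) / ((n : ℂ) + 1) =
          (b (n + 1) - a 0) / ((n : ℂ) + 1) := by
        have h1 : ∀ k ∈ Finset.Icc 1 n,
            (Nat.choose n (k - 1) : ℂ) * a k / (k : ℂ) =
              (Nat.choose (n + 1) k : ℂ) * a k / ((n : ℂ) + 1) := fun k hk =>
          key_div n k (Finset.mem_Icc.mp hk).1 (a k)
        rw [Finset.sum_congr rfl h1]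
        have h2 : b (n + 1) = a 0 + ∑ k ∈ Finset.Icc 1 (n + 1),
            (Nat.choose (n + 1) k : ℂ) * a k := by
          rw [hb (n + 1), icc_sum (n + 1) (fun k => (Nat.choose (n + 1) k : ℂ) * a k)]
          simp
        rw [h2, Finset.sum_Icc_succ_top (by omega : 1 ≤ n + 1)]
        rw [← Finset.sum_div]
        ring
      have hcast : ((n : ℂ) + 1) = ((n + 1 : ℕ) : ℂ) := by push_cast; ring
      rw [← hcast] at *
      rw [add_assoc]
      calc (∑ m ∈ Finset.Icc 1 n, b m / (m : ℂ) -
              b 0 * ∑ k ∈ Finset.Icc 1 n, (1 : ℂ) / (k : ℂ)) +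
            ((∑ k ∈ Finset.Icc 1 n, (Nat.choose n (k - 1) : ℂ) * a k / (k : ℂ)) +
              (Nat.choose (n + 1) (n + 1) : ℂ) * a (n + 1) / ((n : ℂ) + 1)) =
          (∑ m ∈ Finset.Icc 1 n, b m / (m : ℂ) -
              b 0 * ∑ k ∈ Finset.Icc 1 n, (1 : ℂ) / (k : ℂ)) +
            (b (n + 1) - a 0) / ((n : ℂ) + 1) := by rw [hsplit]
        _ = ∑ m ∈ Finset.Icc 1 n, b m / (m : ℂ) + b (n + 1) / ((n : ℂ) + 1) -
            b 0 * (∑ k ∈ Finset.Icc 1 n, (1 : ℂ) / (k : ℂ) + 1 / ((n : ℂ) + 1)) := by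
          rw [hb0]; field_simp; ring
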